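/- (Theorem 3.3) For every n ≥ 0, s_n = ∑_{k=0}^{⌊n/2⌋} C(n−k, n−2k) · d_{n−2k}. -/

import Mathlib

/-- Value of a Dyck step: `true` is an up step (+1), `false` a down step (-1). -/
def stepVal (b : Bool) : ℤ := if b then 1 else -1

/-- Partial sum of the first `i` steps of the word `w`. -/
def psum {n : ℕ} (w : Fin n → Bool) (i : ℕ) : ℤ :=
  ∑ j : Fin n, if (j : ℕ) < i then stepVal (w j) else 0

/-- `d n`: number of symmetric Dyck paths of length `2n`, encoded by their left half,
a word in `{+1,-1}^n` with all partial sums nonnegative. -/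
noncomputable def d (n : ℕ) : ℕ := Set.ncard {w : Fin n → Bool | ∀ i ≤ n, 0 ≤ psum w i}

/-- Steps of a Schröder path: up `U`, down `D`, and the 2-horizontal step `H`. -/
inductive SStep | U | D | H
deriving DecidableEq

/-- Width of a Schröder step. -/
def SStep.width : SStep → ℕ
  | .U => 1 | .D => 1 | .H => 2

/-- Height increment of a Schröder step. -/
def SStep.height : SStep → ℤ
  | .U => 1 | .D => -1 | .H => 0

/-- `s n`: number of symmetric Schröder paths of length `2n`, encoded by their left half,
a sequence of steps of total width `n` with all partial height sums nonnegative. -/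
noncomputable def s (n : ℕ) : ℕ :=
  Set.ncard {l : List SStep | (l.map SStep.width).sum = n ∧
    ∀ i : ℕ, 0 ≤ ((l.take i).map SStep.height).sum}

-- ### auxiliary defs
def okB (w : List Bool) : Prop := ∀ i : ℕ, 0 ≤ ((w.take i).map stepVal).sum
def okS (l : List SStep) : Prop := ∀ i : ℕ, 0 ≤ ((l.take i).map SStep.height).sum

def toB : SStep → Option Bool
  | .U => some true | .D => some false | .H => none

def proj (l : List SStep) : List Bool := l.filterMap toB
def msk (l : List SStep) : List Bool := l.map (fun x => decide (x = .H))

def merge : List Bool → List Bool → List SStep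
  | [], _ => []
  | true :: c, w => .H :: merge c w
  | false :: _, [] => []
  | false :: c, b :: w => (if b then .U else .D) :: merge c w

lemma psum_eq {m : ℕ} (w : Fin m → Bool) (i : ℕ) :
    psum w i = (((List.ofFn w).take i).map stepVal).sum := by
  rw [List.map_take, List.map_ofFn, List.sum_take_ofFn, psum, Finset.sum_filter]
  rfl

lemma ok_append {α : Type} (f : α → ℤ) (l : List α) (x : α) :
    (∀ i : ℕ, 0 ≤ (((l ++ [x]).take i).map f).sum) ↔
      ((∀ i : ℕ, 0 ≤ ((l.take i).map f).sum) ∧ 0 ≤ ((l ++ [x]).map f).sum) := by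
  constructor
  · intro h
    refine ⟨fun i => ?_, ?_⟩
    · rcases le_or_gt i l.length with hi | hi
      · have := h i
        rwa [List.take_append_of_le_length hi] at this
      · rw [List.take_of_length_le (le_of_lt hi)]
        have := h l.length
        rwa [List.take_append_of_le_length le_rfl, List.take_of_length_le le_rfl] at this
    · have := h (l.length + 1)
      rwa [List.take_of_length_le (by simp)] at this
  · rintro ⟨h1, h2⟩ i
    rcases le_or_gt i l.length with hi | hi
    · rw [List.take_append_of_le_length hi]; exact h1 i
    · rw [List.take_of_length_le (by simp; omega)]; exact h2

-- total sum over heights equals sum over projected word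
lemma hsum_eq_proj (l : List SStep) :
    (l.map SStep.height).sum = ((proj l).map stepVal).sum := by
  induction l with
  | nil => simp [proj]
  | cons x t ih =>
    cases x <;> simp [proj, List.filterMap_cons, toB, stepVal, SStep.height, ih]

lemma ok_total {α : Type} (f : α → ℤ) (l : List α)
    (h : ∀ i : ℕ, 0 ≤ ((l.take i).map f).sum) : 0 ≤ (l.map f).sum := by
  have := h l.length
  rwa [List.take_of_length_le le_rfl] at this

lemma okS_iff_okB (l : List SStep) : okS l ↔ okB (proj l) := by
  induction l using List.reverseRecOn with
  | nil => simp [okS, okB, proj]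
  | append_singleton t x ih =>
    unfold okS okB at *
    rw [ok_append]
    cases x
    · -- U
      have hp : proj (t ++ [SStep.U]) = proj t ++ [true] := by
        simp [proj, List.filterMap_append, toB]
      rw [hp, ok_append, ih, List.map_append, List.map_append, List.sum_append,
        List.sum_append, hsum_eq_proj]
      simp [stepVal, SStep.height]
    · -- D
      have hp : proj (t ++ [SStep.D]) = proj t ++ [false] := by
        simp [proj, List.filterMap_append, toB]
      rw [hp, ok_append, ih, List.map_append, List.map_append, List.sum_append,
        List.sum_append, hsum_eq_proj]
      simp [stepVal, SStep.height]
    · -- H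
      have hp : proj (t ++ [SStep.H]) = proj t := by
        simp [proj, List.filterMap_append, toB]
      rw [hp, ← ih]
      constructor
      · rintro ⟨h1, _⟩; exact h1
      · intro h1
        refine ⟨h1, ?_⟩
        rw [List.map_append, List.sum_append, hsum_eq_proj]
        simpa [SStep.height, hsum_eq_proj] using ok_total _ t h1

-- ### merge lemmas
lemma count_true_add_count_false (c : List Bool) :
    c.count true + c.count false = c.length := by
  induction c with
  | nil => simp
  | cons b t ih => cases b <;> simp [List.count_cons] <;> omega

lemma msk_cons (x : SStep) (l : List SStep) :
    msk (x :: l) = decide (x = .H) :: msk l := rfl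

lemma proj_cons (x : SStep) (l : List SStep) :
    proj (x :: l) = ((toB x).toList) ++ proj l := by
  cases x <;> simp [proj, List.filterMap_cons, toB]

lemma msk_merge : ∀ (c w : List Bool), c.count false = w.length →
    msk (merge c w) = c
  | [], _, _ => by simp [merge, msk]
  | true :: c, w, h => by
    rw [show merge (true :: c) w = .H :: merge c w from rfl, msk_cons,
      msk_merge c w (by simpa [List.count_cons] using h)]
    simp
  | false :: c, [], h => by simp [List.count_cons] at h
  | false :: c, b :: w, h => by
    have h' : c.count false = w.length := by
      simp [List.count_cons] at h; omega
    rw [show merge (false :: c) (b :: w) = (if b then .U else .D) :: merge c w from rfl,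
      msk_cons, msk_merge c w h']
    cases b <;> simp

lemma proj_merge : ∀ (c w : List Bool), c.count false = w.length →
    proj (merge c w) = w
  | [], w, h => by
    simp at h
    simp [merge, proj, List.length_eq_zero_iff.mp h.symm]
  | true :: c, w, h => by
    rw [show merge (true :: c) w = .H :: merge c w from rfl, proj_cons,
      proj_merge c w (by simpa [List.count_cons] using h)]
    simp [toB]
  | false :: c, [], h => by simp [List.count_cons] at h
  | false :: c, b :: w, h => by
    have h' : c.count false = w.length := by
      simp [List.count_cons] at h; omega
    rw [show merge (false :: c) (b :: w) = (if b then .U else .D) :: merge c w from rfl,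
      proj_cons, proj_merge c w h']
    cases b <;> simp [toB]

lemma merge_msk_proj (l : List SStep) : merge (msk l) (proj l) = l := by
  induction l with
  | nil => rfl
  | cons x t ih =>
    cases x
    · rw [msk_cons, proj_cons]
      show merge (false :: msk t) (true :: proj t) = SStep.U :: t
      rw [show merge (false :: msk t) (true :: proj t)
          = SStep.U :: merge (msk t) (proj t) from rfl, ih]
    · rw [msk_cons, proj_cons]
      show merge (false :: msk t) (false :: proj t) = SStep.D :: t
      rw [show merge (false :: msk t) (false :: proj t)
          = SStep.D :: merge (msk t) (proj t) from rfl, ih]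
    · rw [msk_cons, proj_cons]
      show merge (true :: msk t) ([] ++ proj t) = SStep.H :: t
      rw [List.nil_append, show merge (true :: msk t) (proj t)
          = SStep.H :: merge (msk t) (proj t) from rfl, ih]

lemma width_eq (l : List SStep) :
    (l.map SStep.width).sum = l.length + l.count .H := by
  induction l with
  | nil => simp
  | cons x t ih =>
    cases x <;> simp [SStep.width, List.count_cons, ih] <;> omega

lemma length_proj (l : List SStep) :
    (proj l).length + l.count .H = l.length := by
  induction l with
  | nil => simp [proj]
  | cons x t ih =>
    cases x <;> rw [proj_cons] <;> simp [toB, List.count_cons] <;> omega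

lemma count_true_msk (l : List SStep) : (msk l).count true = l.count .H := by
  induction l with
  | nil => rfl
  | cons x t ih =>
    cases x <;> rw [msk_cons] <;> simp [List.count_cons, ih]

lemma length_msk (l : List SStep) : (msk l).length = l.length := List.length_map _

lemma d_eq_list (m : ℕ) :
    d m = Set.ncard {w : List Bool | w.length = m ∧ okB w} := by
  rw [d, ← Set.ncard_image_of_injective _ (List.ofFn_injective (n := m) (α := Bool))]
  congr 1
  ext l
  constructor
  · rintro ⟨w, hw, rfl⟩
    refine ⟨by simp, fun i => ?_⟩
    rcases le_or_gt i m with hi | hi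
    · have := hw i hi; rwa [psum_eq] at this
    · rw [List.take_of_length_le (by simp; omega)]
      have := hw m le_rfl
      rwa [psum_eq, List.take_of_length_le (by simp)] at this
  · rintro ⟨hl, hok⟩
    subst hl
    exact ⟨l.get, fun i hi => by rw [psum_eq, List.ofFn_get]; exact hok i, List.ofFn_get l⟩

lemma finite_bool_lists (L k : ℕ) :
    {c : List Bool | c.length = L ∧ c.count true = k}.Finite :=
  (List.finite_length_eq Bool L).subset fun _ hc => hc.1

lemma ncard_bool_lists : ∀ L k : ℕ,
    Set.ncard {c : List Bool | c.length = L ∧ c.count true = k} = Nat.choose L k := by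
  intro L
  induction L with
  | zero =>
    intro k
    cases k with
    | zero =>
      have : {c : List Bool | c.length = 0 ∧ c.count true = 0} = {[]} := by
        ext c
        simp [List.length_eq_zero_iff]
        rintro rfl; rfl
      rw [this, Set.ncard_singleton]; rfl
    | succ k =>
      have : {c : List Bool | c.length = 0 ∧ c.count true = k + 1} = ∅ := by
        ext c
        simp [List.length_eq_zero_iff]
        rintro rfl; simp
      rw [this, Set.ncard_empty, Nat.choose_eq_zero_of_lt (by omega)]
  | succ L ih =>
    intro k
    cases k with
    | zero =>
      have : {c : List Bool | c.length = L + 1 ∧ c.count true = 0} =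
          {List.replicate (L + 1) false} := by
        ext c
        simp only [Set.mem_setOf_eq, Set.mem_singleton_iff]
        constructor
        · rintro ⟨hlen, hcnt⟩
          refine List.eq_replicate_iff.mpr ⟨hlen, fun b hb => ?_⟩
          cases b
          · rfl
          · exact absurd hb (List.count_eq_zero.mp hcnt)
        · rintro rfl
          simp [List.count_replicate]
      rw [this, Set.ncard_singleton, Nat.choose_zero_right]
    | succ k =>
      have hset : {c : List Bool | c.length = L + 1 ∧ c.count true = k + 1} =
          (List.cons true) '' {c | c.length = L ∧ c.count true = k} ∪
          (List.cons false) '' {c | c.length = L ∧ c.count true = k + 1} := by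
        ext c
        cases c with
        | nil => simp
        | cons b t =>
          cases b <;> simp [List.count_cons, Set.mem_image]
      rw [hset, Set.ncard_union_eq ?disj ((finite_bool_lists L k).image _)
          ((finite_bool_lists L (k + 1)).image _),
        Set.ncard_image_of_injective _ (List.cons_injective),
        Set.ncard_image_of_injective _ (List.cons_injective), ih, ih,
        Nat.choose_succ_succ]
      case disj =>
        rw [Set.disjoint_left]
        rintro _ ⟨a, _, rfl⟩ ⟨b, _, heq⟩
        simp at heq

lemma card_A (n k : ℕ) (hk : 2 * k ≤ n) :
    Set.ncard {l : List SStep | ((l.map SStep.width).sum = n ∧ okS l) ∧ l.count .H = k}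
      = Nat.choose (n - k) k * d (n - 2 * k) := by
  rw [d_eq_list, ← ncard_bool_lists (n - k) k, ← Nat.card_coe_set_eq,
    ← Nat.card_coe_set_eq, ← Nat.card_coe_set_eq, ← Nat.card_prod]
  apply Nat.card_congr
  refine
    { toFun := fun l => (⟨msk l.1, ?_, ?_⟩, ⟨proj l.1, ?_, ?_⟩)
      invFun := fun p => ⟨merge p.1.1 p.2.1, ?_⟩
      left_inv := fun l => Subtype.ext (merge_msk_proj l.1)
      right_inv := fun p => ?_ }
  · -- msk length
    obtain ⟨⟨hw, hok⟩, hcnt⟩ := l.2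
    have h1 := width_eq l.1
    have h2 := List.count_le_length (a := SStep.H) (l := l.1)
    rw [length_msk]
    omega
  · rw [count_true_msk, l.2.2]
  · -- proj length
    obtain ⟨⟨hw, hok⟩, hcnt⟩ := l.2
    have h1 := width_eq l.1
    have h2 := length_proj l.1
    omega
  · exact (okS_iff_okB l.1).mp l.2.1.2
  · -- merge membership
    obtain ⟨hp1, hp2⟩ := p.1.2
    obtain ⟨hq1, hq2⟩ := p.2.2
    have hcf : (p.1.1).count false = (p.2.1).length := by
      have := count_true_add_count_false p.1.1
      omega
    have hm := msk_merge _ _ hcf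
    have hpr := proj_merge _ _ hcf
    have hlen : (merge p.1.1 p.2.1).length = p.1.1.length := by
      rw [← length_msk, hm]
    have hcnt : (merge p.1.1 p.2.1).count .H = k := by
      rw [← count_true_msk, hm, hp2]
    refine ⟨⟨?_, (okS_iff_okB _).mpr (by rw [hpr]; exact hq2)⟩, hcnt⟩
    rw [width_eq, hlen, hcnt]
    omega
  · -- right_inv
    obtain ⟨hp1, hp2⟩ := p.1.2
    obtain ⟨hq1, hq2⟩ := p.2.2
    have hcf : (p.1.1).count false = (p.2.1).length := by
      have := count_true_add_count_false p.1.1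
      omega
    exact Prod.ext (Subtype.ext (msk_merge _ _ hcf)) (Subtype.ext (proj_merge _ _ hcf))

instance : Fintype SStep where
  elems := {.U, .D, .H}
  complete := fun x => by cases x <;> simp


/-- **Theorem 3.3.** `s_n = ∑_{k=0}^{⌊n/2⌋} C(n-k, n-2k) d_{n-2k}`. -/
theorem schroeder_eq_sum_dyck (n : ℕ) :
    s n = ∑ k ∈ Finset.range (n / 2 + 1),
      Nat.choose (n - k) (n - 2 * k) * d (n - 2 * k) := by
  classical
  have hSfin : {l : List SStep | (l.map SStep.width).sum = n ∧
      ∀ i : ℕ, 0 ≤ ((l.take i).map SStep.height).sum}.Finite :=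
    (List.finite_length_le SStep n).subset fun l hl => by
      have h1 := width_eq l
      have : (l.map SStep.width).sum = n := hl.1
      simp only [Set.mem_setOf_eq]
      omega
  rw [s, Set.ncard_eq_toFinset_card _ hSfin,
    Finset.card_eq_sum_card_fiberwise (f := fun l => l.count .H)
      (t := Finset.range (n / 2 + 1)) ?hmem]
  · refine Finset.sum_congr rfl fun k hk => ?_
    have hk2 : 2 * k ≤ n := by
      have := Finset.mem_range.mp hk
      omega
    have hfil : ↑(hSfin.toFinset.filter fun l => l.count .H = k) =
        {l : List SStep | ((l.map SStep.width).sum = n ∧ okS l) ∧ l.count .H = k} := by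
      ext l
      simp [Set.Finite.mem_toFinset, okS, and_assoc]
    rw [← Set.ncard_coe_finset, hfil, card_A n k hk2]
    congr 1
    rw [← Nat.choose_symm (by omega : k ≤ n - k)]
    congr 1
    omega
  case hmem =>
    intro l hl
    obtain ⟨hw, -⟩ := hSfin.mem_toFinset.mp hl
    have h1 := width_eq l
    have h2 := List.count_le_length (a := SStep.H) (l := l)
    simp only [Finset.mem_coe, Finset.mem_range]
    omega
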